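/- Let q ≥ 2 and x ≥ 1 be integers. Define M : ℤ → ℚ by M(j) = (q−1)^j for j ≤ 0, M(1) = q, and M(j) = q·M(j−1) − (q−1)·M(j−2) + (q−1)^{x+1}·M(j−x−2) for all j ≥ 2. Then for every integer m ≥ 1, M(m) equals N_q(m,x), the number of admissible words of length m. -/

import Mathlib

/-- A word `w` of length `m` over the alphabet `{0, ..., q-1}` (with `w ⟨m-1,_⟩` the
leftmost/most significant symbol) is admissible for the `Q^q_x` constraint if it contains
no forbidden pattern `(q-1) δ^r (q-1)` with `1 ≤ r ≤ x` and each symbol of `δ^r` at most `q-2`. -/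
def IsAdmissible (q x m : ℕ) (w : Fin m → Fin q) : Prop :=
  ∀ (i r : ℕ) (_hr1 : 1 ≤ r) (_hr2 : r ≤ x) (h : i + r + 1 < m),
    ¬((w ⟨i + r + 1, h⟩ : ℕ) = q - 1 ∧
      (w ⟨i, by omega⟩ : ℕ) = q - 1 ∧
      ∀ (j : ℕ) (_hj1 : 1 ≤ j) (_hj2 : j ≤ r), (w ⟨i + j, by omega⟩ : ℕ) ≤ q - 2)

/-- `Nadm q x m` is the number of admissible words of length `m`. -/
noncomputable def Nadm (q x m : ℕ) : ℕ :=
  Nat.card {w : Fin m → Fin q // IsAdmissible q x m w}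

/-- Lexicographic comparison of words of equal length: `w < w'` iff at the highest
index where they differ `w` has the smaller symbol. -/
def LexLt {q m : ℕ} (w w' : Fin m → Fin q) : Prop :=
  ∃ i : Fin m, w i < w' i ∧ ∀ j : Fin m, i < j → w j = w' j

/-- The lexicographic rank of a word among admissible words of its length. -/
noncomputable def rankOf (q x m : ℕ) (w : Fin m → Fin q) : ℕ :=
  Nat.card {v : Fin m → Fin q // IsAdmissible q x m v ∧ LexLt v w}

namespace QX

def qcons {q m : ℕ} (a : Fin q) (w : Fin m → Fin q) : Fin (m+1) → Fin q :=
  fun i => if h : (i : ℕ) = 0 then a else w ⟨(i : ℕ) - 1, by omega⟩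

def FTA (r : ℕ) {q m : ℕ} (w : Fin m → Fin q) : Prop :=
  ∃ h : r < m, (w ⟨r, h⟩ : ℕ) = q - 1 ∧
    ∀ j (hj : j < r), (w ⟨j, by omega⟩ : ℕ) ≤ q - 2

def Danger (x : ℕ) {q m : ℕ} (w : Fin m → Fin q) : Prop :=
  ∃ r, 1 ≤ r ∧ r ≤ x ∧ FTA r w

variable {q x : ℕ}

lemma qcons_zero {m : ℕ} (a : Fin q) (w : Fin m → Fin q) (h : (0:ℕ) < m+1) :
    qcons a w ⟨0, h⟩ = a := rfl

lemma qcons_pos {m : ℕ} (a : Fin q) (w : Fin m → Fin q) (k : ℕ) (h : k < m+1)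
    (hk : k ≠ 0) (h2 : k - 1 < m) : qcons a w ⟨k, h⟩ = w ⟨k-1, h2⟩ := by
  simp [qcons, hk]

lemma adm_qcons {m : ℕ} (a : Fin q) (w : Fin m → Fin q) :
    IsAdmissible q x (m+1) (qcons a w) ↔
      IsAdmissible q x m w ∧ ((a : ℕ) = q - 1 → ¬ Danger x w) := by
  constructor
  · intro H
    constructor
    · intro i r hr1 hr2 h
      have := H (i+1) r hr1 hr2 (by omega)
      rw [qcons_pos a w (i+1+r+1) (by omega) (by omega) (by omega),
          qcons_pos a w (i+1) (by omega) (by omega) (by omega)] at this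
      simp only [show i+1+r+1-1 = i+r+1 from by omega, show i+1-1 = i from by omega] at this
      intro ⟨h1, h2, h3⟩
      exact this ⟨h1, h2, fun j hj1 hj2 => by
        have := h3 j hj1 hj2
        rw [qcons_pos a w (i+1+j) (by omega) (by omega) (by omega)]
        simpa [show i+1+j-1 = i+j from by omega] using this⟩
    · intro ha ⟨r, hr1, hr2, hrm, hw, hd⟩
      have := H 0 r hr1 hr2 (by omega)
      apply this
      refine ⟨?_, ?_, ?_⟩
      · rw [qcons_pos a w (0+r+1) (by omega) (by omega) (by omega)]
        simpa [show 0+r+1-1 = r from by omega] using hw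
      · exact ha
      · intro j hj1 hj2
        rw [qcons_pos a w (0+j) (by omega) (by omega) (by omega)]
        simpa [show 0+j-1 = j-1 from by omega] using hd (j-1) (by omega)
  · intro ⟨Hw, Ha⟩ i r hr1 hr2 h
    match i with
    | 0 =>
      intro ⟨h1, h2, h3⟩
      rw [qcons_zero] at h2
      apply Ha h2
      refine ⟨r, hr1, hr2, by omega, ?_, ?_⟩
      · rw [qcons_pos a w (0+r+1) (by omega) (by omega) (by omega)] at h1
        simpa [show 0+r+1-1 = r from by omega] using h1
      · intro j hj
        have := h3 (j+1) (by omega) (by omega)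
        rw [qcons_pos a w (0+(j+1)) (by omega) (by omega) (by omega)] at this
        simpa [show 0+(j+1)-1 = j from by omega] using this
    | i+1 =>
      intro ⟨h1, h2, h3⟩
      apply Hw i r hr1 hr2 (by omega)
      rw [qcons_pos a w (i+1+r+1) (by omega) (by omega) (by omega)] at h1
      rw [qcons_pos a w (i+1) (by omega) (by omega) (by omega)] at h2
      refine ⟨by simpa [show i+1+r+1-1 = i+r+1 from by omega] using h1,
              by simpa [show i+1-1 = i from by omega] using h2, ?_⟩
      intro j hj1 hj2
      have := h3 j hj1 hj2
      rw [qcons_pos a w (i+1+j) (by omega) (by omega) (by omega)] at this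
      simpa [show i+1+j-1 = i+j from by omega] using this

lemma qcons_tail {q m : ℕ} (w' : Fin (m+1) → Fin q) :
    qcons (w' ⟨0, by omega⟩) (fun i : Fin m => w' ⟨(i:ℕ)+1, by omega⟩) = w' := by
  funext i
  rcases i with ⟨(_|k), hk⟩ <;> rfl

lemma FTA_zero {q m : ℕ} (hm : 0 < m) (w : Fin m → Fin q) :
    FTA 0 w ↔ (w ⟨0, hm⟩ : ℕ) = q - 1 := by
  constructor
  · rintro ⟨h, h1, -⟩; exact h1
  · intro h; exact ⟨hm, h, fun j hj => absurd hj (by omega)⟩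

lemma FTA_succ_qcons {q m : ℕ} (a : Fin q) (w : Fin m → Fin q) (r : ℕ) :
    FTA (r+1) (qcons a w) ↔ (a : ℕ) ≤ q - 2 ∧ FTA r w := by
  constructor
  · rintro ⟨h, h1, h2⟩
    have ha := h2 0 (by omega)
    rw [qcons_zero] at ha
    refine ⟨ha, by omega, ?_, ?_⟩
    · rw [qcons_pos a w (r+1) (by omega) (by omega) (by omega)] at h1
      simpa using h1
    · intro j hj
      have := h2 (j+1) (by omega)
      rw [qcons_pos a w (j+1) (by omega) (by omega) (by omega)] at this
      simpa using this
  · rintro ⟨ha, hrm, h1, h2⟩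
    refine ⟨by omega, ?_, ?_⟩
    · rw [qcons_pos a w (r+1) (by omega) (by omega) (by omega)]
      simpa using h1
    · intro j hj
      match j with
      | 0 => rw [qcons_zero]; exact ha
      | j+1 =>
        rw [qcons_pos a w (j+1) (by omega) (by omega) (by omega)]
        simpa using h2 j (by omega)

lemma FTA_unique {q m : ℕ} (hq : 2 ≤ q) {w : Fin m → Fin q} {r r' : ℕ}
    (h : FTA r w) (h' : FTA r' w) : r = r' := by
  by_contra hne
  rcases h with ⟨hr, h1, h2⟩
  rcases h' with ⟨hr', h1', h2'⟩
  rcases Nat.lt_or_ge r r' with hlt | hge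
  · have := h2' r hlt
    omega
  · have hlt : r' < r := by omega
    have := h2 r' hlt
    omega

noncomputable def fc (q x m : ℕ) : ℕ :=
  Nat.card {w : Fin m → Fin q // IsAdmissible q x m w ∧ FTA 0 w}

noncomputable def Tc (q x r m : ℕ) : ℕ :=
  Nat.card {w : Fin m → Fin q // IsAdmissible q x m w ∧ FTA r w}

noncomputable def Dc (q x m : ℕ) : ℕ :=
  Nat.card {w : Fin m → Fin q // IsAdmissible q x m w ∧ Danger x w}

noncomputable def Ec (q x m : ℕ) : ℕ :=
  Nat.card {w : Fin m → Fin q // IsAdmissible q x m w ∧ ¬ Danger x w}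

lemma card_partition {α : Type*} [Finite α] (P Q : α → Prop) :
    Nat.card {a // P a} = Nat.card {a // P a ∧ Q a} + Nat.card {a // P a ∧ ¬ Q a} := by
  classical
  have := Fintype.ofFinite α
  rw [Nat.card_eq_fintype_card, Nat.card_eq_fintype_card, Nat.card_eq_fintype_card,
      Fintype.card_subtype, Fintype.card_subtype, Fintype.card_subtype,
      ← Finset.filter_filter, ← Finset.filter_filter]
  exact (Finset.card_filter_add_card_filter_not
    (s := Finset.univ.filter P) Q).symm

lemma card_disjUnion {α : Type*} [Finite α] (P : α → Prop) (F : ℕ → α → Prop) (s : Finset ℕ)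
    (hdisj : ∀ a r r', F r a → F r' a → r = r') :
    Nat.card {a // P a ∧ ∃ r ∈ s, F r a} = ∑ r ∈ s, Nat.card {a // P a ∧ F r a} := by
  classical
  have := Fintype.ofFinite α
  rw [Nat.card_eq_fintype_card, Fintype.card_subtype]
  have hset : Finset.univ.filter (fun a => P a ∧ ∃ r ∈ s, F r a)
      = s.biUnion (fun r => Finset.univ.filter (fun a => P a ∧ F r a)) := by
    ext a
    simp only [Finset.mem_filter, Finset.mem_biUnion, Finset.mem_univ, true_and]
    tauto
  rw [hset, Finset.card_biUnion]
  · apply Finset.sum_congr rfl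
    intro r _
    rw [Nat.card_eq_fintype_card, Fintype.card_subtype]
  · intro r _ r' _ hne
    rw [Function.onFun, Finset.disjoint_left]
    intro a ha ha'
    simp only [Finset.mem_filter, Finset.mem_univ, true_and] at ha ha'
    exact hne (hdisj a r r' ha.2 ha'.2)

variable {q x : ℕ}

lemma card_ne_top (hq : 2 ≤ q) : Nat.card {a : Fin q // ¬ (a:ℕ) = q - 1} = q - 1 := by
  have e : {a : Fin q // ¬ (a:ℕ) = q - 1} ≃ Fin (q-1) :=
    ⟨fun a => ⟨(a:ℕ), by have := a.1.isLt; have := a.2; omega⟩,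
     fun b => ⟨⟨(b:ℕ), by have := b.isLt; omega⟩, by show ¬((b:ℕ) = q - 1); have := b.isLt; omega⟩,
     fun a => by apply Subtype.ext; apply Fin.ext; rfl,
     fun b => by apply Fin.ext; rfl⟩
  rw [Nat.card_congr e, Nat.card_eq_fintype_card, Fintype.card_fin]

lemma card_le_top (hq : 2 ≤ q) : Nat.card {a : Fin q // (a:ℕ) ≤ q - 2} = q - 1 := by
  have e : {a : Fin q // (a:ℕ) ≤ q - 2} ≃ Fin (q-1) :=
    ⟨fun a => ⟨(a:ℕ), by have := a.1.isLt; have := a.2; omega⟩,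
     fun b => ⟨⟨(b:ℕ), by have := b.isLt; omega⟩, by show ((b:ℕ) ≤ q - 2); have := b.isLt; omega⟩,
     fun a => by apply Subtype.ext; apply Fin.ext; rfl,
     fun b => by apply Fin.ext; rfl⟩
  rw [Nat.card_congr e, Nat.card_eq_fintype_card, Fintype.card_fin]

lemma Nadm_succ (hq : 2 ≤ q) (m : ℕ) :
    Nadm q x (m+1) = (q-1) * Nadm q x m + fc q x (m+1) := by
  have h1 := card_partition (fun w : Fin (m+1) → Fin q => IsAdmissible q x (m+1) w) (FTA 0)
  have h2 : Nat.card {w : Fin (m+1) → Fin q // IsAdmissible q x (m+1) w ∧ ¬ FTA 0 w}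
      = (q-1) * Nadm q x m := by
    have e : {w : Fin (m+1) → Fin q // IsAdmissible q x (m+1) w ∧ ¬ FTA 0 w}
        ≃ {a : Fin q // ¬ (a:ℕ) = q - 1} × {w : Fin m → Fin q // IsAdmissible q x m w} := by
      refine ⟨fun w' => (⟨w'.1 ⟨0, by omega⟩, fun h => w'.2.2 ((FTA_zero (by omega) w'.1).2 h)⟩,
        ⟨fun i : Fin m => w'.1 ⟨(i:ℕ)+1, by omega⟩, ?_⟩),
        fun p => ⟨qcons p.1.1 p.2.1,
          (adm_qcons p.1.1 p.2.1).2 ⟨p.2.2, fun h => absurd h p.1.2⟩,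
          fun hF => p.1.2 (by
            have := (FTA_zero (by omega) _).1 hF
            rwa [qcons_zero] at this)⟩, ?_, ?_⟩
      · have hw := w'.2.1
        rw [← qcons_tail w'.1] at hw
        exact ((adm_qcons _ _).1 hw).1
      · intro w'
        exact Subtype.ext (qcons_tail w'.1)
      · intro p
        refine Prod.ext (Subtype.ext ?_) (Subtype.ext ?_)
        · rfl
        · funext i; rfl
    rw [Nat.card_congr e, Nat.card_prod, card_ne_top hq]
    rfl
  calc Nadm q x (m+1) = fc q x (m+1)
        + Nat.card {w : Fin (m+1) → Fin q // IsAdmissible q x (m+1) w ∧ ¬ FTA 0 w} := h1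
    _ = (q-1) * Nadm q x m + fc q x (m+1) := by rw [h2]; omega

lemma fc_succ (hq : 2 ≤ q) (m : ℕ) : fc q x (m+1) = Ec q x m := by
  have e : {w' : Fin (m+1) → Fin q // IsAdmissible q x (m+1) w' ∧ FTA 0 w'}
      ≃ {w : Fin m → Fin q // IsAdmissible q x m w ∧ ¬ Danger x w} := by
    refine ⟨fun w' => ⟨fun i : Fin m => w'.1 ⟨(i:ℕ)+1, by omega⟩, ?_⟩,
      fun w => ⟨qcons ⟨q-1, by omega⟩ w.1,
        (adm_qcons _ _).2 ⟨w.2.1, fun _ => w.2.2⟩,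
        (FTA_zero (by omega) _).2 (by rw [qcons_zero])⟩, ?_, ?_⟩
    · have hw := w'.2.1
      rw [← qcons_tail w'.1] at hw
      have h := (adm_qcons _ _).1 hw
      exact ⟨h.1, h.2 ((FTA_zero (by omega) w'.1).1 w'.2.2)⟩
    · intro w'
      apply Subtype.ext
      have htop : (⟨q-1, by omega⟩ : Fin q) = w'.1 ⟨0, by omega⟩ :=
        Fin.ext ((FTA_zero (by omega) w'.1).1 w'.2.2).symm
      show qcons (⟨q-1, by omega⟩ : Fin q) (fun i : Fin m => w'.1 ⟨(i:ℕ)+1, by omega⟩) = w'.1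
      funext i
      rcases i with ⟨(_|k), hk⟩
      · exact htop
      · rfl
    · intro w
      apply Subtype.ext
      funext i; rfl
  unfold fc Ec
  rw [Nat.card_congr e]

lemma Tc_succ (hq : 2 ≤ q) (r m : ℕ) :
    Tc q x (r+1) (m+1) = (q-1) * Tc q x r m := by
  have e : {w' : Fin (m+1) → Fin q // IsAdmissible q x (m+1) w' ∧ FTA (r+1) w'}
      ≃ {a : Fin q // (a:ℕ) ≤ q - 2}
        × {w : Fin m → Fin q // IsAdmissible q x m w ∧ FTA r w} := by
    refine ⟨fun w' => ?_, fun p => ⟨qcons p.1.1 p.2.1,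
        (adm_qcons _ _).2 ⟨p.2.2.1, fun h => by have := p.1.2; omega⟩,
        (FTA_succ_qcons _ _ _).2 ⟨p.1.2, p.2.2.2⟩⟩, ?_, ?_⟩
    · have hw := w'.2.1
      have hF := w'.2.2
      rw [← qcons_tail w'.1] at hw hF
      have h1 := (adm_qcons _ _).1 hw
      have h2 := (FTA_succ_qcons _ _ _).1 hF
      exact (⟨w'.1 ⟨0, by omega⟩, h2.1⟩,
        ⟨fun i : Fin m => w'.1 ⟨(i:ℕ)+1, by omega⟩, h1.1, h2.2⟩)
    · intro w'
      exact Subtype.ext (qcons_tail w'.1)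
    · intro p
      refine Prod.ext (Subtype.ext ?_) (Subtype.ext ?_)
      · rfl
      · funext i; rfl
  unfold Tc
  rw [Nat.card_congr e, Nat.card_prod, card_le_top hq]

lemma Tc_len_zero (r : ℕ) : Tc q x r 0 = 0 := by
  have : IsEmpty {w : Fin 0 → Fin q // IsAdmissible q x 0 w ∧ FTA r w} :=
    ⟨fun ⟨w, _, hF⟩ => by rcases hF with ⟨h, -⟩; omega⟩
  exact Nat.card_of_isEmpty

lemma fc_zero : fc q x 0 = 0 := Tc_len_zero 0

lemma Tc_formula (hq : 2 ≤ q) (r : ℕ) : ∀ m : ℕ, Tc q x r m = (q-1)^r * fc q x (m - r) := by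
  induction r with
  | zero => intro m; simp [Tc, fc]
  | succ r ih =>
    intro m
    match m with
    | 0 => rw [Tc_len_zero]; simp [fc_zero]
    | m+1 =>
      rw [Tc_succ hq, ih m, show m + 1 - (r+1) = m - r from by omega, pow_succ]
      ring

lemma Dc_sum (hq : 2 ≤ q) (m : ℕ) :
    Dc q x m = ∑ r ∈ Finset.Icc 1 x, Tc q x r m := by
  have e : {w : Fin m → Fin q // IsAdmissible q x m w ∧ Danger x w}
      ≃ {w : Fin m → Fin q // IsAdmissible q x m w ∧ ∃ r ∈ Finset.Icc 1 x, FTA r w} :=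
    Equiv.subtypeEquivRight (fun w => by
      simp only [Danger, Finset.mem_Icc]
      constructor
      · rintro ⟨h, r, h1, h2, h3⟩; exact ⟨h, r, ⟨h1, h2⟩, h3⟩
      · rintro ⟨h, r, ⟨h1, h2⟩, h3⟩; exact ⟨h, r, h1, h2, h3⟩)
  unfold Dc
  rw [Nat.card_congr e,
    card_disjUnion (fun w => IsAdmissible q x m w) (fun r w => FTA r w) _
      (fun w r r' h h' => FTA_unique hq h h')]
  rfl

lemma Nadm_part (m : ℕ) : Nadm q x m = Dc q x m + Ec q x m :=
  card_partition (fun w : Fin m → Fin q => IsAdmissible q x m w) (Danger x)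

lemma Nadm_one (hq : 2 ≤ q) : Nadm q x 1 = q := by
  have e : {w : Fin 1 → Fin q // IsAdmissible q x 1 w} ≃ (Fin 1 → Fin q) :=
    Equiv.subtypeUnivEquiv (fun w i r hr1 hr2 h => absurd h (by omega))
  rw [Nadm, Nat.card_congr e, Nat.card_eq_fintype_card]
  simp

lemma fc_one (hq : 2 ≤ q) : fc q x 1 = 1 := by
  have e : {w : Fin 1 → Fin q // IsAdmissible q x 1 w ∧ FTA 0 w} ≃ Unit := by
    refine ⟨fun _ => Unit.unit,
      fun _ => ⟨fun _ => ⟨q-1, by omega⟩,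
        fun i r hr1 hr2 h => absurd h (by omega),
        ⟨by omega, rfl, fun j hj => absurd hj (by omega)⟩⟩, ?_, fun u => rfl⟩
    intro w
    apply Subtype.ext
    funext i
    have hi : i = ⟨0, by omega⟩ := Fin.ext (by omega)
    rw [hi]
    exact (Fin.ext ((FTA_zero (by omega) w.1).1 w.2.2)).symm
  rw [fc, Nat.card_congr e, Nat.card_eq_fintype_card]
  simp

section Analytic

variable {q x : ℕ} {M : ℤ → ℚ}

lemma Z0 (hq : 2 ≤ q) (hMneg : ∀ j : ℤ, j ≤ 0 → M j = ((q : ℚ) - 1) ^ j) :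
    ∀ k : ℤ, k ≤ 0 → M k - ((q:ℚ)-1) * M (k-1) = 0 := by
  intro k hk
  have hne : ((q:ℚ)-1) ≠ 0 := by
    have : (2:ℚ) ≤ (q:ℚ) := by exact_mod_cast hq
    linarith
  rw [hMneg k hk, hMneg (k-1) (by omega)]
  have : ((q:ℚ)-1)^k = ((q:ℚ)-1)^(k-1) * ((q:ℚ)-1) := by
    rw [← zpow_add_one₀ hne]
    congr 1
    ring
  rw [this]
  ring

lemma MA (hq : 2 ≤ q)
    (hMneg : ∀ j : ℤ, j ≤ 0 → M j = ((q : ℚ) - 1) ^ j)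
    (hM1 : M 1 = q)
    (hMrec : ∀ j : ℤ, 2 ≤ j →
      M j = q * M (j - 1) - ((q : ℚ) - 1) * M (j - 2)
            + ((q : ℚ) - 1) ^ (x + 1) * M (j - (x : ℤ) - 2)) :
    ∀ j : ℤ, 1 ≤ j →
      M j = q * M (j-1) - ∑ i ∈ Finset.range x,
        ((q:ℚ)-1)^(1+i) * (M (j - 2 - (i:ℤ)) - ((q:ℚ)-1) * M (j - 3 - (i:ℤ))) := by
  intro j hj
  rcases eq_or_lt_of_le hj with hj1 | hj2
  · -- j = 1
    subst hj1
    have hsum : ∑ i ∈ Finset.range x,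
        ((q:ℚ)-1)^(1+i) * (M (1 - 2 - (i:ℤ)) - ((q:ℚ)-1) * M (1 - 3 - (i:ℤ))) = 0 := by
      apply Finset.sum_eq_zero
      intro i _
      have h0 : (1:ℤ) - 2 - (i:ℤ) ≤ 0 := by omega
      have := Z0 hq hMneg ((1:ℤ) - 2 - (i:ℤ)) h0
      rw [show (1:ℤ) - 3 - (i:ℤ) = ((1:ℤ) - 2 - (i:ℤ)) - 1 from by ring, this, mul_zero]
    rw [hsum, show (1:ℤ) - 1 = 0 from by ring, hMneg 0 le_rfl, zpow_zero, hM1]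
    ring
  · -- 2 ≤ j
    have hj2' : 2 ≤ j := hj2
    set A : ℕ → ℚ := fun i => ((q:ℚ)-1)^(1+i) * M (j - 2 - (i:ℤ)) with hA
    have hsum : ∑ i ∈ Finset.range x,
        ((q:ℚ)-1)^(1+i) * (M (j - 2 - (i:ℤ)) - ((q:ℚ)-1) * M (j - 3 - (i:ℤ)))
        = ∑ i ∈ Finset.range x, (A i - A (i+1)) := by
      apply Finset.sum_congr rfl
      intro i _
      simp only [hA]
      push_cast
      rw [show j - 2 - ((i:ℤ)+1) = j - 3 - (i:ℤ) from by ring,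
          show 1 + (i+1) = (1+i)+1 from by ring, pow_succ]
      ring
    rw [hsum, Finset.sum_range_sub' A]
    simp only [hA]
    push_cast
    rw [show j - 2 - (0:ℤ) = j - 2 from by ring,
        show j - 2 - (x:ℤ) = j - (x:ℤ) - 2 from by ring,
        show 1 + x = x + 1 from by ring, pow_one,
        hMrec j hj2']
    ring

end Analytic

end QX

/-- the recursively defined `M` agrees with the count of admissible words. -/
theorem stmt_0 (q x : ℕ) (hq : 2 ≤ q) (hx : 1 ≤ x) (M : ℤ → ℚ)
    (hMneg : ∀ j : ℤ, j ≤ 0 → M j = ((q : ℚ) - 1) ^ j)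
    (hM1 : M 1 = q)
    (hMrec : ∀ j : ℤ, 2 ≤ j →
      M j = q * M (j - 1) - ((q : ℚ) - 1) * M (j - 2)
            + ((q : ℚ) - 1) ^ (x + 1) * M (j - (x : ℤ) - 2)) :
    ∀ m : ℕ, 1 ≤ m → M m = Nadm q x m := by
  have hZ0 := QX.Z0 hq hMneg
  have hMA := QX.MA hq hMneg hM1 hMrec
  have hcast1 : ((q - 1 : ℕ) : ℚ) = (q : ℚ) - 1 := by
    push_cast [Nat.cast_sub (show 1 ≤ q from by omega)]
    ring
  have key : ∀ m : ℕ, 1 ≤ m →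
      M m = Nadm q x m ∧ M m - ((q:ℚ)-1) * M ((m:ℤ)-1) = QX.fc q x m := by
    intro m
    induction m using Nat.strong_induction_on with
    | _ m IH =>
      intro hm
      match m, hm with
      | 1, _ =>
        constructor
        · rw [show ((1:ℕ):ℤ) = 1 from rfl, hM1, QX.Nadm_one hq]
        · rw [show ((1:ℕ):ℤ) = 1 from rfl, hM1, QX.fc_one hq,
              show (1:ℤ) - 1 = 0 from by ring, hMneg 0 le_rfl, zpow_zero]
          push_cast
          ring
      | (k+2), _ =>
        have hm' : 1 ≤ k + 1 := by omega
        obtain ⟨IH1, IH2⟩ := IH (k+1) (by omega) hm'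
        -- bracket evaluation
        have hbr : ∀ i : ℕ,
            M (((k+2:ℕ)) - 2 - (i:ℤ)) - ((q:ℚ)-1) * M (((k+2:ℕ)) - 3 - (i:ℤ))
              = (QX.fc q x (k+1-(1+i)) : ℚ) := by
          intro i
          by_cases hik : 1 + i ≤ k
          · obtain ⟨-, h2⟩ := IH (k-i) (by omega) (by omega)
            have e1 : (((k+2:ℕ)):ℤ) - 2 - (i:ℤ) = ((k-i:ℕ):ℤ) := by push_cast; omega
            have e2 : (((k+2:ℕ)):ℤ) - 3 - (i:ℤ) = ((k-i:ℕ):ℤ) - 1 := by push_cast; omega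
            rw [e1, e2, h2, show k+1-(1+i) = k-i from by omega]
          · have e0 : k+1-(1+i) = 0 := by omega
            have hk0 : (((k+2:ℕ)):ℤ) - 2 - (i:ℤ) ≤ 0 := by push_cast; omega
            rw [e0, QX.fc_zero,
                show (((k+2:ℕ)):ℤ) - 3 - (i:ℤ) = ((((k+2:ℕ)):ℤ) - 2 - (i:ℤ)) - 1 from by ring]
            rw [hZ0 _ hk0]
            norm_num
        have hMAj := hMA ((k+2:ℕ):ℤ) (by push_cast; omega)
        have e3 : (((k+2:ℕ)):ℤ) - 1 = ((k+1:ℕ):ℤ) := by push_cast; ring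
        rw [e3, IH1] at hMAj
        have hs : ∑ i ∈ Finset.range x,
            ((q:ℚ)-1)^(1+i) * (M (((k+2:ℕ)) - 2 - (i:ℤ)) - ((q:ℚ)-1) * M (((k+2:ℕ)) - 3 - (i:ℤ)))
            = ∑ i ∈ Finset.range x, ((q:ℚ)-1)^(1+i) * (QX.fc q x (k+1-(1+i)) : ℚ) :=
          Finset.sum_congr rfl (fun i _ => by rw [hbr i])
        rw [hs] at hMAj
        -- combinatorial identities
        have c1 : Nadm q x (k+2) = (q-1) * Nadm q x (k+1) + QX.fc q x (k+2) :=
          QX.Nadm_succ hq (k+1)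
        have c2 : QX.fc q x (k+2) = QX.Ec q x (k+1) := QX.fc_succ hq (k+1)
        have c3 : Nadm q x (k+1) = QX.Dc q x (k+1) + QX.Ec q x (k+1) := QX.Nadm_part (k+1)
        have c5 : QX.Dc q x (k+1) = ∑ i ∈ Finset.range x,
            (q-1)^(1+i) * QX.fc q x (k+1-(1+i)) := by
          rw [QX.Dc_sum hq, ← Finset.Ico_add_one_right_eq_Icc, Finset.sum_Ico_eq_sum_range]
          simp only [Nat.add_sub_cancel]
          apply Finset.sum_congr rfl
          intro i _
          rw [QX.Tc_formula hq]
        -- cast everything to ℚ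
        have c1q : (Nadm q x (k+2) : ℚ)
            = ((q:ℚ)-1) * (Nadm q x (k+1) : ℚ) + (QX.fc q x (k+2) : ℚ) := by
          rw [c1]; push_cast [hcast1]; ring
        have c2q : (QX.fc q x (k+2) : ℚ) = (QX.Ec q x (k+1) : ℚ) := by rw [c2]
        have c3q : (Nadm q x (k+1) : ℚ)
            = (QX.Dc q x (k+1) : ℚ) + (QX.Ec q x (k+1) : ℚ) := by rw [c3]; push_cast; ring
        have c5q : (QX.Dc q x (k+1) : ℚ)
            = ∑ i ∈ Finset.range x, ((q:ℚ)-1)^(1+i) * (QX.fc q x (k+1-(1+i)) : ℚ) := by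
          rw [c5, Nat.cast_sum]
          apply Finset.sum_congr rfl
          intro i _
          push_cast [hcast1]
          ring
        rw [← c5q] at hMAj
        constructor
        · rw [hMAj, c1q, c2q, c3q]; push_cast; ring
        · rw [hMAj, e3, IH1, c2q, c3q]; push_cast; ring
  intro m hm
  exact (key m hm).1
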